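/- arXiv:2406.19506 — 2 statements merged into one kernel-verified Lean document; each statement's English description precedes it below -/
import Mathlib

section
/- Induced pre-power structure along a surjective ring homomorphism: let φ : R₁ → R₂ be a surjective homomorphism of commutative rings and let μ₁ be a power structure on R₁ such that μ₁(1−t, r) lies in 1+t·(ker φ)[[t]] for every r ∈ ker φ (i.e., all positive-degree coefficients of μ₁(1−t, r) lie in ker φ). Then: (a) for every i ≥ 1 and every s ∈ R₂, the power series obtained by applying φ coefficientwise to μ₁(1−t^i, r) is independent of the choice of r ∈ R₁ with φ(r) = s; and (b) the resulting well-defined map μ₂(1−t^i, s) := φ(μ₁(1−t^i, r)) (any r with φ(r) = s) is a pre-power structure on R₂. -/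
/-- Substitution `t ↦ t^i` on formal power series, defined coefficientwise. -/
noncomputable def substPow {R : Type*} [CommRing R] (i : ℕ) (A : PowerSeries R) :
    PowerSeries R :=
  PowerSeries.mk fun n => if i ∣ n then PowerSeries.coeff (n / i) A else 0

/-- A power structure on a commutative ring `R`: a map `(1 + t·R[[t]]) × R → 1 + t·R[[t]]`,
`(A(t), r) ↦ A(t)^r`, satisfying the seven axioms (i)-(vii).  It is encoded as a total map
`pow : R[[t]] → R → R[[t]]` whose axioms are imposed on series with constant coefficient `1`. -/
structure PowerStructure (R : Type*) [CommRing R] where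
  pow : PowerSeries R → R → PowerSeries R
  /-- `A(t)^r` again lies in `1 + t·R[[t]]`. -/
  constantCoeff_pow : ∀ A : PowerSeries R, PowerSeries.constantCoeff A = 1 →
    ∀ r : R, PowerSeries.constantCoeff (pow A r) = 1
  /-- (i) `A(t)^0 = 1`. -/
  pow_zero : ∀ A : PowerSeries R, PowerSeries.constantCoeff A = 1 → pow A 0 = 1
  /-- (ii) `A(t)^1 = A(t)`. -/
  pow_one : ∀ A : PowerSeries R, PowerSeries.constantCoeff A = 1 → pow A 1 = A
  /-- (iii) `(A(t)·B(t))^r = A(t)^r·B(t)^r`. -/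
  mul_pow : ∀ A B : PowerSeries R, PowerSeries.constantCoeff A = 1 →
    PowerSeries.constantCoeff B = 1 → ∀ r : R, pow (A * B) r = pow A r * pow B r
  /-- (iv) `A(t)^(r+s) = A(t)^r·A(t)^s`. -/
  pow_add : ∀ A : PowerSeries R, PowerSeries.constantCoeff A = 1 →
    ∀ r s : R, pow A (r + s) = pow A r * pow A s
  /-- (v) `A(t)^(r·s) = (A(t)^r)^s`. -/
  pow_mul : ∀ A : PowerSeries R, PowerSeries.constantCoeff A = 1 →
    ∀ r s : R, pow A (r * s) = pow (pow A r) s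
  /-- (vi) `(1+t)^r = 1 + r·t + o(t²)`. -/
  pow_one_add_X : ∀ r : R, PowerSeries.coeff 0 (pow (1 + PowerSeries.X) r) = 1 ∧
    PowerSeries.coeff 1 (pow (1 + PowerSeries.X) r) = r
  /-- (vii) `A(tⁱ)^r = A(t)^r|_{t ↦ tⁱ}` for all `i ≥ 1`. -/
  pow_subst : ∀ A : PowerSeries R, PowerSeries.constantCoeff A = 1 → ∀ r : R,
    ∀ i : ℕ, 1 ≤ i → pow (substPow i A) r = substPow i (pow A r)

/-- A pre-power structure on a commutative ring `R`: a map `S_R × R → 1 + t·R[[t]]` where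
`S_R = {1 − tⁱ : i ≥ 1}`, encoded as `pow : ℕ → R → R[[t]]` with `pow i r` standing for
`(1 − tⁱ)^r`, satisfying axioms (i)-(iv) of a pre-power structure. -/
structure PrePowerStructure (R : Type*) [CommRing R] where
  pow : ℕ → R → PowerSeries R
  /-- `(1 − tⁱ)^r` lies in `1 + t·R[[t]]`. -/
  constantCoeff_pow : ∀ i : ℕ, 1 ≤ i → ∀ r : R,
    PowerSeries.constantCoeff (pow i r) = 1
  /-- (i) `(1−t)⁻¹ = Σ_{i≥0} tⁱ`. -/
  pow_neg_one : pow 1 (-1) = PowerSeries.mk fun _ => (1 : R)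
  /-- (ii) `(1−t)^(−a) = 1 + a·t + o(t²)`. -/
  pow_neg : ∀ a : R, PowerSeries.coeff 0 (pow 1 (-a)) = 1 ∧
    PowerSeries.coeff 1 (pow 1 (-a)) = a
  /-- (iii) `(1−t)^(−(a+b)) = (1−t)^(−a)·(1−t)^(−b)`. -/
  pow_neg_add : ∀ a b : R, pow 1 (-(a + b)) = pow 1 (-a) * pow 1 (-b)
  /-- (iv) if `(1−t)^a = f(t)` then `(1−tⁱ)^a = f(tⁱ)` for all `i ≥ 1`. -/
  pow_subst : ∀ a : R, ∀ i : ℕ, 1 ≤ i → pow i a = substPow i (pow 1 a)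

open PowerSeries

lemma substPow_map' {R₁ R₂ : Type*} [CommRing R₁] [CommRing R₂] (φ : R₁ →+* R₂) (i : ℕ)
    (A : PowerSeries R₁) :
    PowerSeries.map φ (substPow i A) = substPow i (PowerSeries.map φ A) := by
  ext n
  simp only [substPow, coeff_map, coeff_mk]
  split <;> simp

lemma substPow_one' {R : Type*} [CommRing R] (i : ℕ) (_hi : 1 ≤ i) :
    substPow i (1 : PowerSeries R) = 1 := by
  ext n
  simp only [substPow, coeff_mk, coeff_one]
  rcases Nat.eq_zero_or_pos n with h | h
  · subst h; simp
  · have hn : n ≠ 0 := h.ne'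
    split
    · rename_i hd
      have hnd : n / i ≠ 0 := by
        intro h0
        have := Nat.div_mul_cancel hd
        rw [h0, zero_mul] at this
        omega
      simp [hnd, hn]
    · simp [hn]

lemma substPow_one_sub_X' {R : Type*} [CommRing R] (i : ℕ) (hi : 1 ≤ i) :
    substPow i (1 - PowerSeries.X : PowerSeries R) = 1 - PowerSeries.X ^ i := by
  have hi0 : i ≠ 0 := by omega
  ext n
  simp only [substPow, coeff_mk, map_sub, coeff_one, coeff_X_pow,
    PowerSeries.coeff_X]
  by_cases hd : i ∣ n
  · obtain ⟨c, rfl⟩ := hd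
    rw [if_pos ⟨c, rfl⟩, Nat.mul_div_cancel_left c (by omega)]
    have e0 : i * c = 0 ↔ c = 0 := by simp [hi0]
    have e1 : i * c = i ↔ c = 1 := by
      constructor
      · intro h
        exact Nat.eq_of_mul_eq_mul_left (show 0 < i by omega)
          (show i * c = i * 1 by rw [mul_one]; exact h)
      · rintro rfl; exact mul_one i
    simp only [e0, e1]
  · rw [if_neg hd]
    have h0 : n ≠ 0 := by rintro rfl; exact hd (dvd_zero i)
    have h2 : n ≠ i := by rintro rfl; exact hd dvd_rfl
    simp [h0, h2]

lemma one_sub_X_mul_mk_one' {R : Type*} [CommRing R] :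
    (1 - PowerSeries.X : PowerSeries R) * (PowerSeries.mk fun _ => 1) = 1 := by
  ext n
  rw [sub_mul, one_mul, map_sub]
  cases n with
  | zero => simp
  | succ m => simp [PowerSeries.coeff_succ_X_mul, coeff_mk, coeff_one]

lemma coeff_one_mul' {R : Type*} [CommRing R] (f g : PowerSeries R) :
    coeff 1 (f * g) = coeff 0 f * coeff 1 g + coeff 1 f * coeff 0 g := by
  rw [coeff_mul, show Finset.HasAntidiagonal.antidiagonal 1 = {(0,1),(1,0)} from rfl]
  simp

lemma constantCoeff_one_sub_X_pow' {R : Type*} [CommRing R] (i : ℕ) (hi : 1 ≤ i) :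
    PowerSeries.constantCoeff (R := R) (1 - PowerSeries.X ^ i) = 1 := by
  simp [zero_pow (show i ≠ 0 by omega)]

/-- `(1-t)^{-1} = Σ tⁱ` for any power structure. -/
lemma powerStructure_pow_neg_one {R : Type*} [CommRing R] (μ : PowerStructure R) :
    μ.pow (1 - PowerSeries.X) (-1) = PowerSeries.mk fun _ => (1 : R) := by
  have hB : PowerSeries.constantCoeff (R := R) (1 - PowerSeries.X) = 1 := by simp
  have h1 : (1 - PowerSeries.X : PowerSeries R) * μ.pow (1 - PowerSeries.X) (-1) = 1 := by
    have h := μ.pow_add (1 - PowerSeries.X) hB 1 (-1)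
    rw [add_neg_cancel, μ.pow_zero _ hB, μ.pow_one _ hB] at h
    exact h.symm
  calc μ.pow (1 - PowerSeries.X) (-1)
      = μ.pow (1 - PowerSeries.X) (-1) * ((1 - PowerSeries.X) * PowerSeries.mk fun _ => 1) := by
        rw [one_sub_X_mul_mk_one', mul_one]
    _ = ((1 - PowerSeries.X) * μ.pow (1 - PowerSeries.X) (-1)) * PowerSeries.mk fun _ => 1 := by
        ring
    _ = PowerSeries.mk fun _ => 1 := by rw [h1, one_mul]

/-- `coeff 1 ((1-t)^r) = -r` for any power structure. -/
lemma powerStructure_coeff_one {R : Type*} [CommRing R] (μ : PowerStructure R) (r : R) :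
    PowerSeries.coeff 1 (μ.pow (1 - PowerSeries.X) r) = -r := by
  have hA : PowerSeries.constantCoeff (R := R) (1 + PowerSeries.X) = 1 := by simp
  have hB : PowerSeries.constantCoeff (R := R) (1 - PowerSeries.X) = 1 := by simp
  have hAB : (1 + PowerSeries.X) * (1 - PowerSeries.X) =
      (1 - PowerSeries.X ^ 2 : PowerSeries R) := by ring
  have h1 := μ.mul_pow _ _ hA hB r
  rw [hAB, ← substPow_one_sub_X' 2 (by norm_num), μ.pow_subst _ hB r 2 (by norm_num)] at h1
  have hc : PowerSeries.coeff 1 (substPow 2 (μ.pow (1 - PowerSeries.X) r)) = 0 := by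
    simp [substPow, show ¬ (2 ∣ 1) by omega]
  have h2 := congrArg (PowerSeries.coeff 1) h1
  rw [hc, coeff_one_mul'] at h2
  obtain ⟨hA0, hA1⟩ := μ.pow_one_add_X r
  rw [hA0, hA1, PowerSeries.coeff_zero_eq_constantCoeff, μ.constantCoeff_pow _ hB r,
    mul_one, one_mul] at h2
  linear_combination -h2

/-- Induced pre-power structure along a surjective ring homomorphism `φ : R₁ → R₂`.
Assume `μ₁` is a power structure on `R₁` such that `μ₁(1−t, r) ∈ 1 + t·(ker φ)[[t]]` for
every `r ∈ ker φ`.  Then (a) for `i ≥ 1` and `s ∈ R₂`, the coefficientwise image under `φ`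
of `μ₁(1−tⁱ, r)` does not depend on the choice of `r` with `φ(r) = s`; and (b) the
well-defined map `μ₂(1−tⁱ, s) := φ(μ₁(1−tⁱ, r))` is a pre-power structure on `R₂`. -/
theorem induced_prePowerStructure_of_surjective {R₁ R₂ : Type*} [CommRing R₁] [CommRing R₂]
    (φ : R₁ →+* R₂) (hφ : Function.Surjective φ) (μ₁ : PowerStructure R₁)
    (hker : ∀ r : R₁, φ r = 0 → ∀ n : ℕ, 1 ≤ n →
      φ (PowerSeries.coeff n (μ₁.pow (1 - PowerSeries.X) r)) = 0) :
    (∀ i : ℕ, 1 ≤ i → ∀ r r' : R₁, φ r = φ r' →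
        PowerSeries.map φ (μ₁.pow (1 - PowerSeries.X ^ i) r)
          = PowerSeries.map φ (μ₁.pow (1 - PowerSeries.X ^ i) r')) ∧
    (∃ ν : PrePowerStructure R₂, ∀ (i : ℕ), 1 ≤ i → ∀ r : R₁,
        ν.pow i (φ r) = PowerSeries.map φ (μ₁.pow (1 - PowerSeries.X ^ i) r)) := by
  have hB : PowerSeries.constantCoeff (R := R₁) (1 - PowerSeries.X) = 1 := by simp
  -- the kernel vanishing lemma
  have hvanish : ∀ i : ℕ, 1 ≤ i → ∀ k : R₁, φ k = 0 →
      PowerSeries.map φ (μ₁.pow (1 - PowerSeries.X ^ i) k) = 1 := by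
    intro i hi k hk
    have h1 : PowerSeries.map φ (μ₁.pow (1 - PowerSeries.X) k) = 1 := by
      ext n
      cases n with
      | zero =>
        simp [PowerSeries.coeff_zero_eq_constantCoeff, μ₁.constantCoeff_pow _ hB k]
      | succ m =>
        simp [hker k hk (m + 1) (by omega), coeff_one]
    rw [← substPow_one_sub_X' i hi, μ₁.pow_subst _ hB k i hi, substPow_map', h1,
      substPow_one' i hi]
  -- independence
  have indep : ∀ i : ℕ, 1 ≤ i → ∀ r r' : R₁, φ r = φ r' →
      PowerSeries.map φ (μ₁.pow (1 - PowerSeries.X ^ i) r)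
        = PowerSeries.map φ (μ₁.pow (1 - PowerSeries.X ^ i) r') := by
    intro i hi r r' h
    have hC := constantCoeff_one_sub_X_pow' (R := R₁) i hi
    have hr : r = r' + (r - r') := by ring
    rw [hr, μ₁.pow_add _ hC, map_mul,
      hvanish i hi (r - r') (by rw [map_sub, h, sub_self]), mul_one]
  refine ⟨indep, ?_⟩
  -- section of φ
  set sec : R₂ → R₁ := fun s => (hφ s).choose with hsec
  have hsecφ : ∀ s : R₂, φ (sec s) = s := fun s => (hφ s).choose_spec
  -- the key compatibility: for any r, map φ (pow (1 - X^i) r) only depends on φ r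
  have key : ∀ i : ℕ, 1 ≤ i → ∀ r : R₁,
      PowerSeries.map φ (μ₁.pow (1 - PowerSeries.X ^ i) (sec (φ r)))
        = PowerSeries.map φ (μ₁.pow (1 - PowerSeries.X ^ i) r) := by
    intro i hi r
    exact indep i hi _ r (hsecφ (φ r))
  have hX1 : (PowerSeries.X : PowerSeries R₁) ^ 1 = PowerSeries.X := pow_one _
  refine ⟨⟨fun i s => PowerSeries.map φ (μ₁.pow (1 - PowerSeries.X ^ i) (sec s)),
    ?_, ?_, ?_, ?_, ?_⟩, ?_⟩
  · -- constantCoeff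
    intro i hi s
    have hC := constantCoeff_one_sub_X_pow' (R := R₁) i hi
    show PowerSeries.constantCoeff (R := R₂) (PowerSeries.map φ (μ₁.pow (1 - PowerSeries.X ^ i) (sec s))) = 1
    rw [← PowerSeries.coeff_zero_eq_constantCoeff, PowerSeries.coeff_map,
      PowerSeries.coeff_zero_eq_constantCoeff, μ₁.constantCoeff_pow _ hC (sec s), map_one]
  · -- pow_neg_one
    show PowerSeries.map φ (μ₁.pow (1 - PowerSeries.X ^ 1) (sec (-1)))
        = PowerSeries.mk fun _ => (1 : R₂)
    have h := indep 1 le_rfl (sec (-1)) (-1) (by rw [hsecφ]; simp)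
    rw [h, hX1, powerStructure_pow_neg_one]
    ext n
    simp [coeff_mk]
  · -- pow_neg
    intro a
    constructor
    · show PowerSeries.coeff 0
        (PowerSeries.map φ (μ₁.pow (1 - PowerSeries.X ^ 1) (sec (-a)))) = 1
      rw [hX1, PowerSeries.coeff_map, PowerSeries.coeff_zero_eq_constantCoeff,
        μ₁.constantCoeff_pow _ hB, map_one]
    · show PowerSeries.coeff 1
        (PowerSeries.map φ (μ₁.pow (1 - PowerSeries.X ^ 1) (sec (-a)))) = a
      rw [hX1, PowerSeries.coeff_map, powerStructure_coeff_one, map_neg, hsecφ, neg_neg]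
  · -- pow_neg_add
    intro a b
    show PowerSeries.map φ (μ₁.pow (1 - PowerSeries.X ^ 1) (sec (-(a + b))))
        = PowerSeries.map φ (μ₁.pow (1 - PowerSeries.X ^ 1) (sec (-a)))
          * PowerSeries.map φ (μ₁.pow (1 - PowerSeries.X ^ 1) (sec (-b)))
    have hab : φ (-(sec a + sec b)) = -(a + b) := by
      rw [map_neg, map_add, hsecφ, hsecφ]
    have h1 := indep 1 le_rfl (sec (-(a + b))) (-(sec a + sec b)) (by rw [hsecφ, hab])
    rw [h1, hX1, show -(sec a + sec b) = -sec a + -sec b by ring, μ₁.pow_add _ hB, map_mul]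
    have h2 := indep 1 le_rfl (sec (-a)) (-sec a) (by rw [hsecφ, map_neg, hsecφ])
    have h3 := indep 1 le_rfl (sec (-b)) (-sec b) (by rw [hsecφ, map_neg, hsecφ])
    rw [hX1] at h2 h3
    rw [h2, h3]
  · -- pow_subst
    intro a i hi
    show PowerSeries.map φ (μ₁.pow (1 - PowerSeries.X ^ i) (sec a))
        = substPow i (PowerSeries.map φ (μ₁.pow (1 - PowerSeries.X ^ 1) (sec a)))
    rw [hX1, ← substPow_one_sub_X' i hi, μ₁.pow_subst _ hB (sec a) i hi, substPow_map']
  · -- spec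
    intro i hi r
    exact key i hi r
end

section
/- Induced power structure along a surjective ring homomorphism: let φ : R₁ → R₂ be a surjective homomorphism of commutative rings, and let μ₁ be a finitely determined power structure on R₁ such that μ₁(1−t, r) lies in 1+t·(ker φ)[[t]] for every r ∈ ker φ. Then there exists a unique (finitely determined) power structure μ₂ on R₂ such that φ(μ₁(A(t), r)) = μ₂(φ(A(t)), φ(r)) for all A(t) ∈ 1+t·R₁[[t]] and all r ∈ R₁, where φ is applied to a power series coefficientwise. -/
/-- A power structure is finitely determined if for each `i > 0` there is `j > 0` such that
`A(t)^m` modulo `t^(i+1)` is determined by `A(t)` modulo `t^(j+1)`. -/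
def PowerStructure.FinitelyDetermined {R : Type*} [CommRing R] (μ : PowerStructure R) :
    Prop :=
  ∀ i : ℕ, 0 < i → ∃ j : ℕ, 0 < j ∧
    ∀ A B : PowerSeries R, PowerSeries.constantCoeff A = 1 →
      PowerSeries.constantCoeff B = 1 →
      (∀ n ≤ j, PowerSeries.coeff n A = PowerSeries.coeff n B) →
      ∀ m : R, ∀ n ≤ i, PowerSeries.coeff n (μ.pow A m) = PowerSeries.coeff n (μ.pow B m)

open PowerSeries


section AuxBasic

variable {R₁ R₂ : Type*} [CommRing R₁] [CommRing R₂]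

lemma coeff_substPow (i n : ℕ) (A : PowerSeries R₁) :
    coeff n (substPow i A) = if i ∣ n then coeff (n / i) A else 0 :=
  coeff_mk _ _

lemma constCoeff_substPow (i : ℕ) (A : PowerSeries R₁) :
    constantCoeff (substPow i A) = constantCoeff A := by
  rw [← coeff_zero_eq_constantCoeff, coeff_substPow]
  simp

lemma substPow_one (i : ℕ) : substPow i (1 : PowerSeries R₁) = 1 := by
  ext n
  rw [coeff_substPow]
  simp only [coeff_one]
  by_cases hn : n = 0
  · subst hn; simp
  · rw [if_neg hn]
    split_ifs with hd h0
    · exfalso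
      rcases hd with ⟨c, rfl⟩
      rcases Nat.eq_zero_or_pos i with rfl | hi
      · exact hn (by ring)
      · rw [Nat.mul_div_cancel_left c hi] at h0
        exact hn (by rw [h0]; ring)
    · rfl
    · rfl

lemma map_substPow (φ : R₁ →+* R₂) (i : ℕ) (A : PowerSeries R₁) :
    PowerSeries.map φ (substPow i A) = substPow i (PowerSeries.map φ A) := by
  ext n
  rw [coeff_map, coeff_substPow, coeff_substPow]
  split_ifs <;> simp [coeff_map]

lemma substPow_two_oneSubX : substPow 2 ((1 : PowerSeries R₁) - X) = (1 - X) * (1 + X) := by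
  have h : ((1 : PowerSeries R₁) - X) * (1 + X) = 1 - X ^ 2 := by ring
  rw [h]
  ext n
  rw [coeff_substPow, map_sub, map_sub, coeff_one, coeff_one, coeff_X, coeff_X_pow]
  split_ifs <;> first | (exfalso; omega) | norm_num

lemma constCoeff_oneSubX : constantCoeff ((1 : PowerSeries R₁) - X) = 1 := by simp

lemma constCoeff_oneAddX : constantCoeff ((1 : PowerSeries R₁) + X) = 1 := by simp

end AuxBasic

section AuxMu
variable {R₁ R₂ : Type*} [CommRing R₁] [CommRing R₂] (μ₁ : PowerStructure R₁)

lemma pow_one_series (r : R₁) : μ₁.pow 1 r = 1 := by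
  have h1 : constantCoeff (1 : PowerSeries R₁) = 1 := map_one _
  have h := μ₁.pow_mul 1 h1 0 r
  rw [zero_mul, μ₁.pow_zero 1 h1] at h
  exact h.symm

lemma coeff_one_pow_oneSubX (b : R₁) : coeff 1 (μ₁.pow (1 - X) b) = -b := by
  have hmul := μ₁.mul_pow (1 - X) (1 + X) constCoeff_oneSubX constCoeff_oneAddX b
  have hsub := μ₁.pow_subst (1 - X) constCoeff_oneSubX b 2 (by norm_num)
  rw [substPow_two_oneSubX, hmul] at hsub
  have h1 := congrArg (coeff 1) hsub
  rw [coeff_one_mul, coeff_substPow, if_neg (by omega),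
    μ₁.constantCoeff_pow _ constCoeff_oneAddX, μ₁.constantCoeff_pow _ constCoeff_oneSubX,
    (μ₁.pow_one_add_X b).2, mul_one, mul_one] at h1
  linear_combination h1

lemma pow_Ek (b r : R₁) (k : ℕ) (hk : 1 ≤ k) :
    μ₁.pow (substPow k (μ₁.pow (1 - X) b)) r = substPow k (μ₁.pow (1 - X) (b * r)) := by
  rw [μ₁.pow_subst _ (μ₁.constantCoeff_pow _ constCoeff_oneSubX b) r k hk,
    ← μ₁.pow_mul (1 - X) constCoeff_oneSubX b r]

lemma constCoeff_Ek (b : R₁) (k : ℕ) :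
    constantCoeff (substPow k (μ₁.pow (1 - X) b)) = 1 := by
  rw [constCoeff_substPow]
  exact μ₁.constantCoeff_pow _ constCoeff_oneSubX b

lemma coeff_Ek_lt (b : R₁) (k n : ℕ) (h1 : 1 ≤ n) (h2 : n < k) :
    coeff n (substPow k (μ₁.pow (1 - X) b)) = 0 := by
  rw [coeff_substPow, if_neg]
  rintro ⟨c, rfl⟩
  rcases Nat.eq_zero_or_pos c with rfl | hc
  · simp at h1
  · nlinarith

lemma coeff_Ek_self (b : R₁) (k : ℕ) (hk : 1 ≤ k) :
    coeff k (substPow k (μ₁.pow (1 - X) b)) = -b := by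
  rw [coeff_substPow, if_pos dvd_rfl, Nat.div_self hk, coeff_one_pow_oneSubX]

variable (φ : R₁ →+* R₂)

lemma map_E_eq_one
    (hker : ∀ r : R₁, φ r = 0 → ∀ n : ℕ, 1 ≤ n →
      φ (PowerSeries.coeff n (μ₁.pow (1 - PowerSeries.X) r)) = 0)
    (b : R₁) (hb : φ b = 0) : PowerSeries.map φ (μ₁.pow (1 - X) b) = 1 := by
  ext n
  rw [coeff_map, coeff_one]
  rcases eq_or_ne n 0 with rfl | hn
  · rw [if_pos rfl, coeff_zero_eq_constantCoeff,
      μ₁.constantCoeff_pow _ constCoeff_oneSubX b, map_one]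
  · rw [if_neg hn, hker b hb n (by omega)]

lemma map_Ek_eq_one
    (hker : ∀ r : R₁, φ r = 0 → ∀ n : ℕ, 1 ≤ n →
      φ (PowerSeries.coeff n (μ₁.pow (1 - PowerSeries.X) r)) = 0)
    (b : R₁) (hb : φ b = 0) (k : ℕ) :
    PowerSeries.map φ (substPow k (μ₁.pow (1 - X) b)) = 1 := by
  rw [map_substPow, map_E_eq_one μ₁ φ hker b hb, substPow_one]

end AuxMu


section AuxApprox
variable {R₁ R₂ : Type*} [CommRing R₁] [CommRing R₂]

lemma constCoeff_map' (φ : R₁ →+* R₂) (A : PowerSeries R₁) :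
    constantCoeff (PowerSeries.map φ A) = φ (constantCoeff A) := by
  rw [← coeff_zero_eq_constantCoeff, coeff_map, coeff_zero_eq_constantCoeff]

lemma coeff_mul_of_vanish (P Q : PowerSeries R₁) (n : ℕ)
    (hQ : ∀ m, 1 ≤ m → m ≤ n → coeff m Q = 0) :
    coeff n (P * Q) = coeff n P * constantCoeff Q := by
  rw [coeff_mul, Finset.sum_eq_single (n, 0)]
  · rw [coeff_zero_eq_constantCoeff]
  · rintro ⟨a, b⟩ hab hne
    rw [Finset.HasAntidiagonal.mem_antidiagonal] at hab
    have hb : 1 ≤ b := by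
      rcases Nat.eq_zero_or_pos b with rfl | h
      · exact absurd (by simp [Prod.ext_iff]; omega) hne
      · exact h
    rw [hQ b hb (by omega), mul_zero]
  · intro h
    exact absurd (Finset.HasAntidiagonal.mem_antidiagonal.mpr (by omega)) h

lemma coeff_mul_of_vanish' (P Q : PowerSeries R₁) (n : ℕ) (hn : 1 ≤ n)
    (hP0 : constantCoeff P = 1) (hQ0 : constantCoeff Q = 1)
    (hQ : ∀ m, 1 ≤ m → m < n → coeff m Q = 0) :
    coeff n (P * Q) = coeff n P + coeff n Q := by
  rw [coeff_mul, ← Finset.sum_subset (s₁ := ({(n, 0), (0, n)} : Finset (ℕ × ℕ)))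
    (by intro p hp; simp at hp; rcases hp with rfl | rfl <;> simp)
    (by
      rintro ⟨a, b⟩ hab hnot
      rw [Finset.HasAntidiagonal.mem_antidiagonal] at hab
      simp only [Finset.mem_insert, Finset.mem_singleton, Prod.ext_iff] at hnot
      have hb1 : 1 ≤ b ∧ b < n := by omega
      rw [hQ b hb1.1 hb1.2, mul_zero])]
  rw [Finset.sum_insert (by simp; omega), Finset.sum_singleton]
  simp [hP0, hQ0]

variable (μ₁ : PowerStructure R₁) (φ : R₁ →+* R₂)

lemma approx
    (hker : ∀ r : R₁, φ r = 0 → ∀ n : ℕ, 1 ≤ n →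
      φ (PowerSeries.coeff n (μ₁.pow (1 - PowerSeries.X) r)) = 0)
    (j : ℕ) (A : PowerSeries R₁) (hA : constantCoeff A = 1) :
    ∃ P : PowerSeries R₁, constantCoeff P = 1 ∧
      (∀ n, 1 ≤ n → n ≤ j → coeff n P = coeff n A) ∧
      (PowerSeries.map φ A = 1 → PowerSeries.map φ P = 1) ∧
      (∀ q : R₁, φ q = 0 → PowerSeries.map φ (μ₁.pow P q) = 1) ∧
      (PowerSeries.map φ A = 1 → ∀ r : R₁, PowerSeries.map φ (μ₁.pow P r) = 1) := by
  induction j with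
  | zero =>
    refine ⟨1, map_one _, by omega, fun _ => map_one _, ?_, ?_⟩
    · intro q _; rw [pow_one_series]; exact map_one _
    · intro _ r; rw [pow_one_series]; exact map_one _
  | succ j ih =>
    obtain ⟨P, hP1, hPc, hPm, hPq, hPr⟩ := ih
    set c := -(coeff (j + 1) A - coeff (j + 1) P) with hc
    set Q := substPow (j + 1) (μ₁.pow (1 - X) c) with hQdef
    have hQ1 : constantCoeff Q = 1 := constCoeff_Ek μ₁ c (j + 1)
    have hQlt : ∀ m, 1 ≤ m → m < j + 1 → coeff m Q = 0 :=
      fun m h1 h2 => coeff_Ek_lt μ₁ c (j + 1) m h1 h2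
    have hQself : coeff (j + 1) Q = coeff (j + 1) A - coeff (j + 1) P := by
      rw [hQdef, coeff_Ek_self μ₁ c (j + 1) (by omega), hc, neg_neg]
    have hcker : PowerSeries.map φ A = 1 → φ c = 0 := by
      intro hmA
      have h1 : φ (coeff (j + 1) A) = 0 := by
        have := congrArg (coeff (j + 1)) hmA
        rw [coeff_map, coeff_one, if_neg (by omega)] at this
        exact this
      have h2 : φ (coeff (j + 1) P) = 0 := by
        have := congrArg (coeff (j + 1)) (hPm hmA)
        rw [coeff_map, coeff_one, if_neg (by omega)] at this
        exact this
      rw [hc]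
      simp [h1, h2]
    refine ⟨P * Q, by rw [map_mul, hP1, hQ1, mul_one], ?_, ?_, ?_, ?_⟩
    · intro n h1 h2
      rcases eq_or_ne n (j + 1) with rfl | hne
      · rw [coeff_mul_of_vanish' P Q (j + 1) (by omega) hP1 hQ1 hQlt, hQself]
        ring
      · have hnj : n ≤ j := by omega
        rw [coeff_mul_of_vanish P Q n (fun m hm1 hm2 => hQlt m hm1 (by omega)), hQ1, mul_one]
        exact hPc n h1 hnj
    · intro hmA
      rw [map_mul, hPm hmA, one_mul, hQdef, map_Ek_eq_one μ₁ φ hker c (hcker hmA)]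
    · intro q hq
      rw [μ₁.mul_pow P Q hP1 hQ1 q, map_mul, hPq q hq, one_mul, hQdef,
        pow_Ek μ₁ c q (j + 1) (by omega), map_Ek_eq_one μ₁ φ hker (c * q) (by rw [map_mul, hq, mul_zero])]
    · intro hmA r
      rw [μ₁.mul_pow P Q hP1 hQ1 r, map_mul, hPr hmA r, one_mul, hQdef,
        pow_Ek μ₁ c r (j + 1) (by omega),
        map_Ek_eq_one μ₁ φ hker (c * r) (by rw [map_mul, hcker hmA, zero_mul])]

end AuxApprox


section AuxWD
variable {R₁ R₂ : Type*} [CommRing R₁] [CommRing R₂]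
variable (μ₁ : PowerStructure R₁) (φ : R₁ →+* R₂)

lemma map_pow_eq_one (hfd : μ₁.FinitelyDetermined)
    (hker : ∀ r : R₁, φ r = 0 → ∀ n : ℕ, 1 ≤ n →
      φ (PowerSeries.coeff n (μ₁.pow (1 - PowerSeries.X) r)) = 0)
    (B : PowerSeries R₁) (hB : constantCoeff B = 1) (q : R₁)
    (h : φ q = 0 ∨ PowerSeries.map φ B = 1) :
    PowerSeries.map φ (μ₁.pow B q) = 1 := by
  ext n
  rw [coeff_map, coeff_one]
  rcases eq_or_ne n 0 with rfl | hn
  · rw [if_pos rfl, coeff_zero_eq_constantCoeff, μ₁.constantCoeff_pow B hB q, map_one]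
  · obtain ⟨j, hj, hjprop⟩ := hfd n (by omega)
    obtain ⟨P, hP1, hPc, hPm, hPq, hPr⟩ := approx μ₁ φ hker j B hB
    have heq := hjprop B P hB hP1 (fun m hm => by
      rcases eq_or_ne m 0 with rfl | hm0
      · simp only [coeff_zero_eq_constantCoeff, hB, hP1]
      · exact (hPc m (by omega) hm).symm) q n le_rfl
    have hone : PowerSeries.map φ (μ₁.pow P q) = 1 := by
      rcases h with h | h
      · exact hPq q h
      · exact hPr h q
    have h2 := congrArg (coeff n) hone
    rw [coeff_map, coeff_one, if_neg hn] at h2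
    rw [if_neg hn, heq, h2]

lemma wd (hfd : μ₁.FinitelyDetermined)
    (hker : ∀ r : R₁, φ r = 0 → ∀ n : ℕ, 1 ≤ n →
      φ (PowerSeries.coeff n (μ₁.pow (1 - PowerSeries.X) r)) = 0)
    (A B : PowerSeries R₁) (r s : R₁)
    (hA : constantCoeff A = 1) (hB : constantCoeff B = 1)
    (hAB : PowerSeries.map φ A = PowerSeries.map φ B) (hrs : φ r = φ s) :
    PowerSeries.map φ (μ₁.pow A r) = PowerSeries.map φ (μ₁.pow B s) := by
  have hrsum : s + (r - s) = r := by ring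
  have h1 : μ₁.pow A r = μ₁.pow A s * μ₁.pow A (r - s) := by
    rw [← hrsum, μ₁.pow_add A hA s (r - s)]
    rw [hrsum]
  have hBu : constantCoeff B = ((1 : R₁ˣ) : R₁) := by rw [hB]; rfl
  have hBu1 : B * PowerSeries.invOfUnit B 1 = 1 := PowerSeries.mul_invOfUnit B 1 hBu
  set u := PowerSeries.invOfUnit B 1 with hu
  have hu0 : constantCoeff u = 1 := by
    have h2 := congrArg (constantCoeff) hBu1
    rw [map_mul, hB, one_mul, map_one] at h2
    exact h2
  have hC0 : constantCoeff (A * u) = 1 := by rw [map_mul, hA, hu0, mul_one]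
  have hBC : B * (A * u) = A := by
    rw [show B * (A * u) = A * (B * u) by ring, hBu1, mul_one]
  have hmapC : PowerSeries.map φ (A * u) = 1 := by
    rw [map_mul, hAB, ← map_mul, hBu1, map_one]
  calc PowerSeries.map φ (μ₁.pow A r)
      = PowerSeries.map φ (μ₁.pow A s) * PowerSeries.map φ (μ₁.pow A (r - s)) := by
        rw [h1, map_mul]
    _ = PowerSeries.map φ (μ₁.pow A s) := by
        rw [map_pow_eq_one μ₁ φ hfd hker A hA (r - s) (Or.inl (by rw [map_sub, hrs, sub_self])),
          mul_one]
    _ = PowerSeries.map φ (μ₁.pow B s) * PowerSeries.map φ (μ₁.pow (A * u) s) := by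
        rw [← map_mul, ← μ₁.mul_pow B (A * u) hB hC0 s, hBC]
    _ = PowerSeries.map φ (μ₁.pow B s) := by
        rw [map_pow_eq_one μ₁ φ hfd hker (A * u) hC0 s (Or.inr hmapC), mul_one]

end AuxWD

section AuxLift
variable {R₁ R₂ : Type*} [CommRing R₁] [CommRing R₂]

noncomputable def liftSeries (φ : R₁ →+* R₂) (hφ : Function.Surjective φ)
    (B : PowerSeries R₂) : PowerSeries R₁ :=
  PowerSeries.mk fun n => if n = 0 then 1 else Classical.choose (hφ (coeff n B))

lemma constCoeff_liftSeries (φ : R₁ →+* R₂) (hφ : Function.Surjective φ) (B : PowerSeries R₂) :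
    constantCoeff (liftSeries φ hφ B) = 1 := by
  rw [← coeff_zero_eq_constantCoeff, liftSeries, coeff_mk, if_pos rfl]

lemma map_liftSeries (φ : R₁ →+* R₂) (hφ : Function.Surjective φ) (B : PowerSeries R₂)
    (hB : constantCoeff B = 1) : PowerSeries.map φ (liftSeries φ hφ B) = B := by
  ext n
  rw [coeff_map, liftSeries, coeff_mk]
  split_ifs with h
  · subst h
    rw [map_one, coeff_zero_eq_constantCoeff, hB]
  · exact Classical.choose_spec (hφ (coeff n B))

lemma exists_lift (φ : R₁ →+* R₂) (hφ : Function.Surjective φ) (B : PowerSeries R₂)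
    (hB : constantCoeff B = 1) (s : R₂) :
    ∃ (A : PowerSeries R₁) (r : R₁), constantCoeff A = 1 ∧
      PowerSeries.map φ A = B ∧ φ r = s :=
  ⟨liftSeries φ hφ B, Classical.choose (hφ s), constCoeff_liftSeries φ hφ B,
    map_liftSeries φ hφ B hB, Classical.choose_spec (hφ s)⟩

open scoped Classical in
noncomputable def inducedPow (φ : R₁ →+* R₂) (hφ : Function.Surjective φ)
    (μ₁ : PowerStructure R₁) : PowerSeries R₂ → R₂ → PowerSeries R₂ :=
  fun B s => if constantCoeff B = 1 then
    PowerSeries.map φ (μ₁.pow (liftSeries φ hφ B) (Classical.choose (hφ s))) else 1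

lemma inducedPow_compat (φ : R₁ →+* R₂) (hφ : Function.Surjective φ)
    (μ₁ : PowerStructure R₁) (hfd : μ₁.FinitelyDetermined)
    (hker : ∀ r : R₁, φ r = 0 → ∀ n : ℕ, 1 ≤ n →
      φ (PowerSeries.coeff n (μ₁.pow (1 - PowerSeries.X) r)) = 0)
    (A : PowerSeries R₁) (hA : constantCoeff A = 1) (r : R₁) :
    PowerSeries.map φ (μ₁.pow A r) = inducedPow φ hφ μ₁ (PowerSeries.map φ A) (φ r) := by
  have hA2 : constantCoeff (PowerSeries.map φ A) = 1 := by
    rw [constCoeff_map', hA, map_one]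
  rw [inducedPow, if_pos hA2]
  exact wd μ₁ φ hfd hker A (liftSeries φ hφ (PowerSeries.map φ A)) r
    (Classical.choose (hφ (φ r))) hA (constCoeff_liftSeries φ hφ _)
    (map_liftSeries φ hφ _ hA2).symm (Classical.choose_spec (hφ (φ r))).symm

end AuxLift


/-- Induced power structure along a surjective ring homomorphism `φ : R₁ → R₂`: if `μ₁` is a
finitely determined power structure on `R₁` with `μ₁(1−t, r) ∈ 1 + t·(ker φ)[[t]]` for every
`r ∈ ker φ`, then there is a unique (finitely determined) power structure `μ₂` on `R₂` with
`φ(μ₁(A(t), r)) = μ₂(φ(A(t)), φ(r))` for all `A(t) ∈ 1 + t·R₁[[t]]` and `r ∈ R₁`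
(uniqueness meaning: any power structure `μ₂'` compatible with `φ` in this sense agrees with
`μ₂` on all of `(1 + t·R₂[[t]]) × R₂`). -/
theorem induced_powerStructure_of_surjective {R₁ R₂ : Type*} [CommRing R₁] [CommRing R₂]
    (φ : R₁ →+* R₂) (hφ : Function.Surjective φ) (μ₁ : PowerStructure R₁)
    (hfd : μ₁.FinitelyDetermined)
    (hker : ∀ r : R₁, φ r = 0 → ∀ n : ℕ, 1 ≤ n →
      φ (PowerSeries.coeff n (μ₁.pow (1 - PowerSeries.X) r)) = 0) :
    ∃ μ₂ : PowerStructure R₂, μ₂.FinitelyDetermined ∧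
      (∀ A : PowerSeries R₁, PowerSeries.constantCoeff A = 1 → ∀ r : R₁,
        PowerSeries.map φ (μ₁.pow A r) = μ₂.pow (PowerSeries.map φ A) (φ r)) ∧
      ∀ μ₂' : PowerStructure R₂,
        (∀ A : PowerSeries R₁, PowerSeries.constantCoeff A = 1 → ∀ r : R₁,
          PowerSeries.map φ (μ₁.pow A r) = μ₂'.pow (PowerSeries.map φ A) (φ r)) →
        ∀ B : PowerSeries R₂, PowerSeries.constantCoeff B = 1 → ∀ s : R₂,
          μ₂'.pow B s = μ₂.pow B s := by
  classical
  have compat : ∀ A : PowerSeries R₁, constantCoeff A = 1 → ∀ r : R₁,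
      PowerSeries.map φ (μ₁.pow A r) = inducedPow φ hφ μ₁ (PowerSeries.map φ A) (φ r) :=
    fun A hA r => inducedPow_compat φ hφ μ₁ hfd hker A hA r
  have key : ∀ B : PowerSeries R₂, constantCoeff B = 1 → ∀ s : R₂,
      ∀ (A : PowerSeries R₁) (r : R₁), constantCoeff A = 1 →
      PowerSeries.map φ A = B → φ r = s →
      inducedPow φ hφ μ₁ B s = PowerSeries.map φ (μ₁.pow A r) := by
    intro B hB s A r hA hAB hrs
    rw [← hAB, ← hrs, compat A hA r]
  refine ⟨{ pow := inducedPow φ hφ μ₁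
            constantCoeff_pow := ?_
            pow_zero := ?_
            pow_one := ?_
            mul_pow := ?_
            pow_add := ?_
            pow_mul := ?_
            pow_one_add_X := ?_
            pow_subst := ?_ }, ?_, ?_, ?_⟩
  · -- constantCoeff_pow
    intro B hB s
    obtain ⟨A, r, hA, hAB, hrs⟩ := exists_lift φ hφ B hB s
    rw [key B hB s A r hA hAB hrs, constCoeff_map', μ₁.constantCoeff_pow A hA r, map_one]
  · -- pow_zero
    intro B hB
    rw [key B hB 0 (liftSeries φ hφ B) 0 (constCoeff_liftSeries φ hφ B)
      (map_liftSeries φ hφ B hB) (map_zero φ),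
      μ₁.pow_zero _ (constCoeff_liftSeries φ hφ B), map_one]
  · -- pow_one
    intro B hB
    rw [key B hB 1 (liftSeries φ hφ B) 1 (constCoeff_liftSeries φ hφ B)
      (map_liftSeries φ hφ B hB) (map_one φ),
      μ₁.pow_one _ (constCoeff_liftSeries φ hφ B), map_liftSeries φ hφ B hB]
  · -- mul_pow
    intro B C hB hC s
    obtain ⟨A, r, hA, hAB, hrs⟩ := exists_lift φ hφ B hB s
    obtain ⟨A', r', hA', hAC, _⟩ := exists_lift φ hφ C hC s
    have h0 : constantCoeff (A * A') = 1 := by rw [map_mul, hA, hA', mul_one]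
    rw [key (B * C) (by rw [map_mul, hB, hC, mul_one]) s (A * A') r h0
        (by rw [map_mul, hAB, hAC]) hrs,
      key B hB s A r hA hAB hrs, key C hC s A' r hA' hAC hrs,
      μ₁.mul_pow A A' hA hA' r, map_mul]
  · -- pow_add
    intro B hB s s'
    obtain ⟨A, r, hA, hAB, hrs⟩ := exists_lift φ hφ B hB s
    obtain ⟨r', hrs'⟩ := hφ s'
    rw [key B hB (s + s') A (r + r') hA hAB (by rw [map_add, hrs, hrs']),
      key B hB s A r hA hAB hrs, key B hB s' A r' hA hAB hrs',
      μ₁.pow_add A hA r r', map_mul]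
  · -- pow_mul
    intro B hB s s'
    obtain ⟨A, r, hA, hAB, hrs⟩ := exists_lift φ hφ B hB s
    obtain ⟨r', hrs'⟩ := hφ s'
    rw [key B hB s A r hA hAB hrs,
      key B hB (s * s') A (r * r') hA hAB (by rw [map_mul, hrs, hrs']),
      μ₁.pow_mul A hA r r']
    have h2 := compat (μ₁.pow A r) (μ₁.constantCoeff_pow A hA r) r'
    rw [hrs'] at h2
    exact h2
  · -- pow_one_add_X
    intro s
    obtain ⟨r, hrs⟩ := hφ s
    have h1X : constantCoeff ((1 : PowerSeries R₁) + X) = 1 := constCoeff_oneAddX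
    have hmap : PowerSeries.map φ ((1 : PowerSeries R₁) + X) = 1 + X := by
      rw [map_add, map_one, PowerSeries.map_X]
    rw [key (1 + X) (by rw [constCoeff_oneAddX]) s (1 + X) r h1X hmap hrs]
    constructor
    · rw [coeff_map, (μ₁.pow_one_add_X r).1, map_one]
    · rw [coeff_map, (μ₁.pow_one_add_X r).2, hrs]
  · -- pow_subst
    intro B hB s i hi
    obtain ⟨A, r, hA, hAB, hrs⟩ := exists_lift φ hφ B hB s
    rw [key (substPow i B) (by rw [constCoeff_substPow, hB]) s (substPow i A) r
        (by rw [constCoeff_substPow, hA]) (by rw [map_substPow, hAB]) hrs,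
      μ₁.pow_subst A hA r i hi, map_substPow, key B hB s A r hA hAB hrs]
  · -- FinitelyDetermined
    intro i hi
    obtain ⟨j, hj, hprop⟩ := hfd i hi
    refine ⟨j, hj, ?_⟩
    intro B B' hB hB' hcoeff s n hn
    show (coeff n) (inducedPow φ hφ μ₁ B s) = (coeff n) (inducedPow φ hφ μ₁ B' s)
    set A := liftSeries φ hφ B with hAdef
    set A' : PowerSeries R₁ := PowerSeries.mk fun n =>
      if n ≤ j then coeff n A else Classical.choose (hφ (coeff n B')) with hA'def
    have hA0 : constantCoeff A = 1 := constCoeff_liftSeries φ hφ B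
    have hA'0 : constantCoeff A' = 1 := by
      rw [← coeff_zero_eq_constantCoeff, hA'def, coeff_mk, if_pos (by omega),
        coeff_zero_eq_constantCoeff, hA0]
    have hmapA' : PowerSeries.map φ A' = B' := by
      ext m
      rw [coeff_map, hA'def, coeff_mk]
      split_ifs with h1
      · rw [← coeff_map, map_liftSeries φ hφ B hB, hcoeff m h1]
      · exact Classical.choose_spec (hφ (coeff m B'))
    have heq := hprop A A' hA0 hA'0
      (fun m hm => by rw [hA'def, coeff_mk, if_pos hm]) (Classical.choose (hφ s)) n hn
    rw [key B hB s A (Classical.choose (hφ s)) hA0 (map_liftSeries φ hφ B hB)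
        (Classical.choose_spec (hφ s)),
      key B' hB' s A' (Classical.choose (hφ s)) hA'0 hmapA' (Classical.choose_spec (hφ s)),
      coeff_map, coeff_map, heq]
  · -- compatibility
    exact compat
  · -- uniqueness
    intro μ₂' hcompat' B hB s
    show μ₂'.pow B s = inducedPow φ hφ μ₁ B s
    obtain ⟨A, r, hA, hAB, hrs⟩ := exists_lift φ hφ B hB s
    rw [← hAB, ← hrs, ← hcompat' A hA r, compat A hA r]
end
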